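/- Let g : ℝ≥0 → ℝ≥0 be continuous with g(t) = ρ(t, y_T(t)). Define t₀ = 0 and t_n = t_{n−1} + max(0, (g(t_{n−1}) − ℓ))/(1+v). Assume: (a) for each n, if g(t_{n−1}) > ℓ then g(s) > ℓ for all s ∈ [t_{n−1}, t_n) (the lower-estimator property). If T* = min{t : g(t) ≤ ℓ} is finite, then the nondecreasing sequence (t_n) satisfies t_n ≤ T* for all n and converges to T*. -/

import Mathlib

open Filter

/-- Lemma 6 of the paper, finite case: the fixed-point iteration of the
simple universal lower estimator is nondecreasing, never overshoots the minimal
interception time `T*`, and converges to it. -/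
theorem simple_iteration_converges (g : ℝ → ℝ) (ℓ v : ℝ) (hℓ : 0 ≤ ℓ) (hv : 0 ≤ v)
    (hg : ContinuousOn g (Set.Ici (0 : ℝ)))
    (t : ℕ → ℝ) (ht0 : t 0 = 0)
    (hiter : ∀ n : ℕ, t (n + 1) = t n + max 0 (g (t n) - ℓ) / (1 + v))
    (hsafe : ∀ n : ℕ, ℓ < g (t n) → ∀ s ∈ Set.Ico (t n) (t (n + 1)), ℓ < g s)
    (Tstar : ℝ) (hT : IsLeast {s : ℝ | 0 ≤ s ∧ g s ≤ ℓ} Tstar) :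
    Monotone t ∧ (∀ n, t n ≤ Tstar) ∧ Tendsto t atTop (nhds Tstar) := by
  have hv1 : (0:ℝ) < 1 + v := by linarith
  have hmono : Monotone t := by
    apply monotone_nat_of_le_succ
    intro n
    rw [hiter n]
    have : 0 ≤ max 0 (g (t n) - ℓ) / (1 + v) := by positivity
    linarith
  have hTnn : 0 ≤ Tstar := hT.1.1
  have hle : ∀ n, t n ≤ Tstar := by
    intro n
    induction n with
    | zero => rw [ht0]; exact hTnn
    | succ n ih =>
      by_contra h
      push_neg at h
      rcases le_or_gt (g (t n)) ℓ with hgl | hgl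
      · have : t (n+1) = t n := by
          rw [hiter n, max_eq_left (by linarith), zero_div, add_zero]
        rw [this] at h; exact absurd ih (not_le.mpr h)
      · exact absurd (hsafe n hgl Tstar ⟨ih, h⟩) (not_lt.mpr hT.1.2)
  refine ⟨hmono, hle, ?_⟩
  set L := ⨆ n, t n with hL
  have hbdd : BddAbove (Set.range t) := ⟨Tstar, by rintro x ⟨n, rfl⟩; exact hle n⟩
  have htend : Tendsto t atTop (nhds L) := tendsto_atTop_ciSup hmono hbdd
  have hLle : L ≤ Tstar := ciSup_le hle
  have h0 : ∀ n, 0 ≤ t n := fun n => ht0 ▸ hmono (Nat.zero_le n)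
  have hL0 : 0 ≤ L := le_trans (h0 0) (le_ciSup hbdd 0)
  -- g (t n) → g L
  have htendW : Tendsto t atTop (nhdsWithin L (Set.Ici 0)) :=
    tendsto_nhdsWithin_iff.mpr ⟨htend, Eventually.of_forall h0⟩
  have hgt : Tendsto (fun n => g (t n)) atTop (nhds (g L)) :=
    ((hg L hL0).tendsto).comp htendW
  -- the increment tends to 0
  have hsucc : Tendsto (fun n => t (n+1)) atTop (nhds L) :=
    htend.comp (tendsto_add_atTop_nat 1)
  have hdiff : Tendsto (fun n => t (n+1) - t n) atTop (nhds 0) := by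
    have := hsucc.sub htend
    simpa using this
  have hinc : Tendsto (fun n => max 0 (g (t n) - ℓ) / (1 + v)) atTop (nhds 0) := by
    have : (fun n => max 0 (g (t n) - ℓ) / (1 + v)) = fun n => t (n+1) - t n := by
      funext n; rw [hiter n]; ring
    rw [this]; exact hdiff
  have hinc' : Tendsto (fun n => max 0 (g (t n) - ℓ) / (1 + v)) atTop
      (nhds (max 0 (g L - ℓ) / (1 + v))) := by
    exact ((tendsto_const_nhds.max (hgt.sub tendsto_const_nhds)).div_const (1+v))
  have hmax : max 0 (g L - ℓ) / (1 + v) = 0 := tendsto_nhds_unique hinc' hinc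
  have hgL : g L ≤ ℓ := by
    field_simp at hmax
    rw [mul_zero, max_eq_left_iff] at hmax
    linarith
  have : Tstar ≤ L := hT.2 ⟨hL0, hgL⟩
  have : L = Tstar := le_antisymm hLle this
  rwa [this] at htend
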